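/- For n ≥ 2, the action of the real symplectic group Sp(2n,ℝ) := {g ∈ GL_{2n}(ℝ) : gᵀ J g = J}, regarded as a subgroup of GL_{2n}(ℂ), on the projective space ℙ(ℂ^{2n}) has exactly four orbits: D⁺ = {[z] : h(z,z) > 0}, D⁻ = {[z] : h(z,z) < 0}, the set Σ₀ of lines spanned by a nonzero real vector (i.e., [z] such that the line ℂz contains a nonzero vector of ℝ^{2n}), and the complement Σ \ Σ₀ of Σ₀ in the set Σ = {[z] : h(z,z) = 0} of h-isotropic lines. -/

import Mathlib

open Matrix
open scoped ComplexOrder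

noncomputable section

/-- The complex matrix `J = [[0, -I], [I, 0]]` on `ℂ^{2n} = ℂ^n ⊕ ℂ^n`. -/
def Jmat (n : ℕ) : Matrix (Fin n ⊕ Fin n) (Fin n ⊕ Fin n) ℂ :=
  Matrix.fromBlocks (0 : Matrix (Fin n) (Fin n) ℂ) (-1) 1 0

/-- The real matrix `J = [[0, -I], [I, 0]]` on `ℝ^{2n} = ℝ^n ⊕ ℝ^n`. -/
def JmatR (n : ℕ) : Matrix (Fin n ⊕ Fin n) (Fin n ⊕ Fin n) ℝ :=
  Matrix.fromBlocks (0 : Matrix (Fin n) (Fin n) ℝ) (-1) 1 0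

/-- The Hermitian form `h(z, w) = (i/2) z̄ᵀ J w` of signature `(n, n)` on
`ℂ^{2n}`. -/
def hform (n : ℕ) (z w : Fin n ⊕ Fin n → ℂ) : ℂ :=
  (Complex.I / 2) * (star z ⬝ᵥ (Jmat n *ᵥ w))

/-- The real symplectic group `Sp(2n, ℝ) = {g ∈ GL(2n, ℝ) : gᵀ J g = J}`. -/
def SpR (n : ℕ) : Set (Matrix (Fin n ⊕ Fin n) (Fin n ⊕ Fin n) ℝ) :=
  {g | g.det ≠ 0 ∧ gᵀ * JmatR n * g = JmatR n}

/-- The set `D⁺` of `h`-positive lines in `ℙ(ℂ^{2n})`. -/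
def Dpos (n : ℕ) : Set (Projectivization ℂ (Fin n ⊕ Fin n → ℂ)) :=
  {x | ∃ (z : Fin n ⊕ Fin n → ℂ) (hz : z ≠ 0),
    0 < hform n z z ∧ Projectivization.mk ℂ z hz = x}

/-- The set `D⁻` of `h`-negative lines in `ℙ(ℂ^{2n})`. -/
def Dneg (n : ℕ) : Set (Projectivization ℂ (Fin n ⊕ Fin n → ℂ)) :=
  {x | ∃ (z : Fin n ⊕ Fin n → ℂ) (hz : z ≠ 0),
    hform n z z < 0 ∧ Projectivization.mk ℂ z hz = x}

/-- The set `Σ` of `h`-isotropic lines in `ℙ(ℂ^{2n})`. -/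
def Siso (n : ℕ) : Set (Projectivization ℂ (Fin n ⊕ Fin n → ℂ)) :=
  {x | ∃ (z : Fin n ⊕ Fin n → ℂ) (hz : z ≠ 0),
    hform n z z = 0 ∧ Projectivization.mk ℂ z hz = x}

/-- The set `Σ₀` of lines spanned by a nonzero real vector. -/
def Sreal (n : ℕ) : Set (Projectivization ℂ (Fin n ⊕ Fin n → ℂ)) :=
  {x | ∃ (v : Fin n ⊕ Fin n → ℝ) (hv : (fun i => (v i : ℂ)) ≠ 0),
    Projectivization.mk ℂ (fun i => (v i : ℂ)) hv = x}

/-- Two points of `ℙ(ℂ^{2n})` lie in the same `Sp(2n,ℝ)`-orbit, where a real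
symplectic matrix acts on `ℂ^{2n}` via its complexification. -/
def SameOrbitSp (n : ℕ) (x y : Projectivization ℂ (Fin n ⊕ Fin n → ℂ)) : Prop :=
  ∃ g ∈ SpR n, ∃ (z : Fin n ⊕ Fin n → ℂ) (hz : z ≠ 0)
    (hgz : (g.map Complex.ofReal) *ᵥ z ≠ 0),
      Projectivization.mk ℂ z hz = x ∧
        Projectivization.mk ℂ ((g.map Complex.ofReal) *ᵥ z) hgz = y

namespace SpAux

variable {n : ℕ}

abbrev VR (n : ℕ) := Fin n ⊕ Fin n → ℝ
abbrev VC (n : ℕ) := Fin n ⊕ Fin n → ℂ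

/-- The real symplectic form. -/
def om (n : ℕ) (x y : VR n) : ℝ := x ⬝ᵥ (JmatR n *ᵥ y)

lemma JmatR_transpose : (JmatR n)ᵀ = -JmatR n := by
  simp [JmatR, Matrix.fromBlocks_transpose, Matrix.fromBlocks_neg]

lemma JmatR_mul_self : JmatR n * JmatR n = -1 := by
  simp [JmatR, Matrix.fromBlocks_multiply, ← Matrix.fromBlocks_one,
    Matrix.fromBlocks_neg]

lemma Jmat_eq_map : Jmat n = (JmatR n).map Complex.ofReal := by
  ext i j
  cases i <;> cases j <;>
    simp [Jmat, JmatR, Matrix.fromBlocks, Matrix.map_apply] <;>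
    simp [Matrix.one_apply, Matrix.neg_apply, apply_ite]

lemma om_skew (x y : VR n) : om n x y = -om n y x := by
  unfold om
  rw [Matrix.dotProduct_mulVec]
  have h1 : x ᵥ* JmatR n = -(JmatR n *ᵥ x) := by
    rw [← Matrix.mulVec_transpose, JmatR_transpose, Matrix.neg_mulVec]
  rw [h1, neg_dotProduct, dotProduct_comm]

lemma om_self (x : VR n) : om n x x = 0 := by
  have := om_skew x x
  linarith

lemma om_add_left (x x' y : VR n) : om n (x + x') y = om n x y + om n x' y := by
  simp [om, add_dotProduct]

lemma om_add_right (x y y' : VR n) : om n x (y + y') = om n x y + om n x y' := by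
  simp [om, Matrix.mulVec_add, dotProduct_add]

lemma om_smul_left (c : ℝ) (x y : VR n) : om n (c • x) y = c * om n x y := by
  simp [om, smul_dotProduct]

lemma om_smul_right (c : ℝ) (x y : VR n) : om n x (c • y) = c * om n x y := by
  simp [om, Matrix.mulVec_smul, dotProduct_smul]

lemma om_zero_left (y : VR n) : om n 0 y = 0 := by simp [om]

lemma om_zero_right (x : VR n) : om n x 0 = 0 := by simp [om]

lemma om_sub_right (x y y' : VR n) : om n x (y - y') = om n x y - om n x y' := by
  have : y - y' = y + (-1 : ℝ) • y' := by ring_nf; module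
  rw [this, om_add_right, om_smul_right]; ring

lemma om_nondeg {x : VR n} (h : ∀ y, om n x y = 0) : x = 0 := by
  funext i
  have hy := h (-(JmatR n *ᵥ Pi.single i 1))
  have hJ : JmatR n *ᵥ (-(JmatR n *ᵥ Pi.single i 1)) = Pi.single i 1 := by
    rw [Matrix.mulVec_neg, Matrix.mulVec_mulVec, JmatR_mul_self,
      Matrix.neg_mulVec, Matrix.one_mulVec, neg_neg]
  rw [om, hJ, dotProduct_single] at hy
  simpa using hy

lemma exists_om_ne {x : VR n} (hx : x ≠ 0) : ∃ y, om n x y ≠ 0 := by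
  by_contra h
  push_neg at h
  exact hx (om_nondeg h)


-- ### transvections and the symplectic group

lemma matrix_ext_of_mulVec {A B : Matrix (Fin n ⊕ Fin n) (Fin n ⊕ Fin n) ℝ}
    (h : ∀ u, A *ᵥ u = B *ᵥ u) : A = B := by
  ext i j
  have := congrFun (h (Pi.single j 1)) i
  simpa [Matrix.mulVec_single] using this

/-- Symplectic transvection. -/
def Tv (n : ℕ) (v : VR n) (c : ℝ) : Matrix (Fin n ⊕ Fin n) (Fin n ⊕ Fin n) ℝ :=
  1 + c • Matrix.vecMulVec v (JmatR n *ᵥ v)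

lemma Tv_mulVec (v : VR n) (c : ℝ) (u : VR n) :
    Tv n v c *ᵥ u = u + (c * om n u v) • v := by
  funext i
  simp only [Tv, Matrix.add_mulVec, Matrix.one_mulVec, Matrix.smul_mulVec]
  have : Matrix.vecMulVec v (JmatR n *ᵥ v) *ᵥ u = (om n u v) • v := by
    funext k
    simp only [Matrix.mulVec, dotProduct, Matrix.vecMulVec_apply, om,
      Pi.smul_apply, smul_eq_mul]
    rw [Finset.sum_mul]
    exact Finset.sum_congr rfl fun j _ => by ring
  rw [this]
  simp [Pi.smul_apply, smul_eq_mul]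
  ring

lemma om_Tv (v : VR n) (c : ℝ) (u w : VR n) :
    om n (Tv n v c *ᵥ u) (Tv n v c *ᵥ w) = om n u w := by
  rw [Tv_mulVec, Tv_mulVec, om_add_left, om_add_right, om_add_right,
    om_smul_left, om_smul_left, om_smul_right, om_smul_right, om_self]
  rw [om_skew v w]
  ring

lemma Tv_mul_Tv_neg (v : VR n) (c : ℝ) : Tv n v c * Tv n v (-c) = 1 := by
  apply matrix_ext_of_mulVec
  intro u
  rw [← Matrix.mulVec_mulVec, Tv_mulVec, Tv_mulVec, om_add_left, om_smul_left,
    om_self, Matrix.one_mulVec]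
  have hc : c * (om n u v + -c * om n u v * 0) = c * om n u v := by ring
  rw [hc, add_assoc, ← add_smul]
  simp

lemma Tv_mem_SpR (v : VR n) (c : ℝ) : Tv n v c ∈ SpR n := by
  constructor
  · intro h
    have h1 := Tv_mul_Tv_neg v c
    have := congrArg Matrix.det h1
    rw [Matrix.det_mul, h, zero_mul, Matrix.det_one] at this
    exact zero_ne_one this
  · apply matrix_ext_of_mulVec
    intro u
    funext i
    have key : ∀ w, Pi.single i (1:ℝ) ⬝ᵥ (((Tv n v c)ᵀ * JmatR n * Tv n v c) *ᵥ w)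
        = Pi.single i 1 ⬝ᵥ (JmatR n *ᵥ w) := by
      intro w
      rw [Matrix.mul_assoc, ← Matrix.mulVec_mulVec, ← Matrix.mulVec_mulVec,
        Matrix.dotProduct_mulVec, Matrix.vecMul_transpose]
      exact om_Tv v c (Pi.single i 1) w
    have := key u
    rwa [single_dotProduct, single_dotProduct, one_mul, one_mul]
      at this

lemma SpR_mul {g g' : Matrix (Fin n ⊕ Fin n) (Fin n ⊕ Fin n) ℝ}
    (hg : g ∈ SpR n) (hg' : g' ∈ SpR n) : g * g' ∈ SpR n := by
  obtain ⟨hd, hf⟩ := hg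
  obtain ⟨hd', hf'⟩ := hg'
  refine ⟨by simp [Matrix.det_mul, hd, hd'], ?_⟩
  rw [Matrix.transpose_mul]
  calc g'ᵀ * gᵀ * (JmatR n) * (g * g') = g'ᵀ * (gᵀ * JmatR n * g) * g' := by
        simp only [Matrix.mul_assoc]
    _ = g'ᵀ * JmatR n * g' := by rw [hf]
    _ = JmatR n := hf'

lemma SpR_om {g : Matrix (Fin n ⊕ Fin n) (Fin n ⊕ Fin n) ℝ} (hg : g ∈ SpR n)
    (x y : VR n) : om n (g *ᵥ x) (g *ᵥ y) = om n x y := by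
  unfold om
  have h1 : ∀ s, (g *ᵥ x) ⬝ᵥ s = x ⬝ᵥ (gᵀ *ᵥ s) := by
    intro s
    rw [Matrix.dotProduct_mulVec, Matrix.vecMul_transpose]
  rw [h1, Matrix.mulVec_mulVec, Matrix.mulVec_mulVec, hg.2]

lemma SpR_inj {g : Matrix (Fin n ⊕ Fin n) (Fin n ⊕ Fin n) ℝ} (hg : g ∈ SpR n)
    {u : VR n} (h : g *ᵥ u = 0) : u = 0 := by
  have hu : g⁻¹ *ᵥ (g *ᵥ u) = u := by
    rw [Matrix.mulVec_mulVec, Matrix.nonsing_inv_mul g (isUnit_iff_ne_zero.2 hg.1),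
      Matrix.one_mulVec]
  rw [h, Matrix.mulVec_zero] at hu
  exact hu.symm


-- ### transitivity lemmas

lemma om_sub_left (x x' y : VR n) : om n (x - x') y = om n x y - om n x' y := by
  have : x - x' = x + (-1 : ℝ) • x' := by module
  rw [this, om_add_left, om_smul_left]; ring

lemma trans1' {x y : VR n} (h : om n x y ≠ 0) :
    ∃ g ∈ SpR n, g *ᵥ x = y ∧ ∀ w, om n w (y - x) = 0 → g *ᵥ w = w := by
  refine ⟨Tv n (y - x) (om n x y)⁻¹, Tv_mem_SpR _ _, ?_, ?_⟩
  · rw [Tv_mulVec, om_sub_right, om_self, sub_zero, inv_mul_cancel₀ h, one_smul]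
    abel
  · intro w hw
    rw [Tv_mulVec, hw, mul_zero, zero_smul, add_zero]

lemma trans_vec {x y : VR n} (hx : x ≠ 0) (hy : y ≠ 0) :
    ∃ g ∈ SpR n, g *ᵥ x = y := by
  by_cases h : om n x y ≠ 0
  · obtain ⟨g, hg, hgx, -⟩ := trans1' h
    exact ⟨g, hg, hgx⟩
  push_neg at h
  obtain ⟨a, ha⟩ := exists_om_ne hx
  obtain ⟨b, hb⟩ := exists_om_ne hy
  have key : ∃ z, om n x z ≠ 0 ∧ om n z y ≠ 0 := by
    by_cases hay : om n a y ≠ 0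
    · exact ⟨a, ha, hay⟩
    by_cases hxb : om n x b ≠ 0
    · refine ⟨b, hxb, ?_⟩
      rw [om_skew]
      simpa using hb
    push_neg at hay hxb
    refine ⟨a + b, ?_, ?_⟩
    · rw [om_add_right, hxb, add_zero]; exact ha
    · rw [om_add_left, hay, zero_add, om_skew]
      simpa using hb
  obtain ⟨z, hxz, hzy⟩ := key
  obtain ⟨g₁, hg₁, hg₁x, -⟩ := trans1' hxz
  obtain ⟨g₂, hg₂, hg₂z, -⟩ := trans1' hzy
  refine ⟨g₂ * g₁, SpR_mul hg₂ hg₁, ?_⟩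
  rw [← Matrix.mulVec_mulVec, hg₁x, hg₂z]

lemma pair_step {x' y₁ y' : VR n} (hperp : om n x' (y' - y₁) = 0)
    (h : om n y₁ y' ≠ 0) : ∃ g ∈ SpR n, g *ᵥ y₁ = y' ∧ g *ᵥ x' = x' := by
  obtain ⟨g, hg, hgy, hfix⟩ := trans1' h
  exact ⟨g, hg, hgy, hfix x' hperp⟩

lemma stab_chain {x' y₁ y₃ y' : VR n} (h1 : om n x' (y₃ - y₁) = 0)
    (h2 : om n x' (y' - y₃) = 0) (h3 : om n y₁ y₃ ≠ 0) (h4 : om n y₃ y' ≠ 0) :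
    ∃ g ∈ SpR n, g *ᵥ y₁ = y' ∧ g *ᵥ x' = x' := by
  obtain ⟨g₁, hg₁, hg₁y, hg₁x⟩ := pair_step h1 h3
  obtain ⟨g₂, hg₂, hg₂y, hg₂x⟩ := pair_step h2 h4
  refine ⟨g₂ * g₁, SpR_mul hg₂ hg₁, ?_, ?_⟩
  · rw [← Matrix.mulVec_mulVec, hg₁y, hg₂y]
  · rw [← Matrix.mulVec_mulVec, hg₁x, hg₂x]

lemma ne_zero_of_om_ne {x y : VR n} (h : om n x y ≠ 0) : x ≠ 0 := by
  intro hx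
  rw [hx, om_zero_left] at h
  exact h rfl

lemma trans_hyp {x y x' y' : VR n} (h : om n x y = 1) (h' : om n x' y' = 1) :
    ∃ g ∈ SpR n, g *ᵥ x = x' ∧ g *ᵥ y = y' := by
  have hx : x ≠ 0 := ne_zero_of_om_ne (by rw [h]; norm_num)
  have hx' : x' ≠ 0 := ne_zero_of_om_ne (by rw [h']; norm_num)
  obtain ⟨g₁, hg₁, hg₁x⟩ := trans_vec hx hx'
  set y₁ := g₁ *ᵥ y with hy₁
  have h₁ : om n x' y₁ = 1 := by
    rw [← hg₁x, hy₁, SpR_om hg₁, h]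
  by_cases hyy : om n y₁ y' ≠ 0
  · obtain ⟨g₂, hg₂, hg₂y, hg₂x⟩ := pair_step
      (by rw [om_sub_right, h₁, h', sub_self]) hyy
    exact ⟨g₂ * g₁, SpR_mul hg₂ hg₁, by rw [← Matrix.mulVec_mulVec, hg₁x, hg₂x],
      by rw [← Matrix.mulVec_mulVec, ← hy₁, hg₂y]⟩
  push_neg at hyy
  have e1 : om n x' (y₁ + x' - y₁) = 0 := by
    have hxx : y₁ + x' - y₁ = x' := by abel
    rw [hxx, om_self]
  have e2 : om n x' (y' - (y₁ + x')) = 0 := by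
    rw [om_sub_right, om_add_right, om_self, add_zero, h', h₁, sub_self]
  have e3 : om n y₁ (y₁ + x') ≠ 0 := by
    rw [om_add_right, om_self, zero_add, om_skew, h₁]
    norm_num
  have e4 : om n (y₁ + x') y' ≠ 0 := by
    rw [om_add_left, hyy, zero_add, h']
    norm_num
  obtain ⟨g₂, hg₂, hg₂y, hg₂x⟩ := stab_chain e1 e2 e3 e4
  exact ⟨g₂ * g₁, SpR_mul hg₂ hg₁, by rw [← Matrix.mulVec_mulVec, hg₁x, hg₂x],
    by rw [← Matrix.mulVec_mulVec, ← hy₁, hg₂y]⟩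

/-- Linear independence of a pair of vectors. -/
def Indep (n : ℕ) (a b : VR n) : Prop :=
  ∀ s t : ℝ, s • a + t • b = 0 → s = 0 ∧ t = 0

lemma Indep.left_ne_zero {a b : VR n} (h : Indep n a b) : a ≠ 0 := by
  intro ha
  have := h 1 0 (by rw [ha]; simp)
  simpa using this.1

lemma perp_exists {x' u : VR n} (hperp : om n x' u = 0) (hind : Indep n x' u) :
    ∃ w, om n x' w = 0 ∧ om n u w ≠ 0 := by
  by_contra hcon
  push_neg at hcon
  obtain ⟨w₀', hw₀'⟩ := exists_om_ne hind.left_ne_zero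
  set w₀ := (om n x' w₀')⁻¹ • w₀' with hw₀
  have hxw₀ : om n x' w₀ = 1 := by
    rw [hw₀, om_smul_right, inv_mul_cancel₀ hw₀']
  set c := om n u w₀ with hc
  have key : u - c • x' = 0 := by
    apply om_nondeg
    intro w
    have hw : om n x' (w - om n x' w • w₀) = 0 := by
      rw [om_sub_right, om_smul_right, hxw₀, mul_one, sub_self]
    have huw := hcon _ hw
    rw [om_sub_right, om_smul_right, ← hc, sub_eq_zero] at huw
    rw [om_sub_left, om_smul_left, huw]
    ring
  have : (-c) • x' + (1 : ℝ) • u = 0 := by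
    rw [sub_eq_zero] at key
    rw [one_smul, key]
    module
  simpa using (hind _ _ this).2

lemma trans_iso {a b a' b' : VR n} (hi : Indep n a b) (h : om n a b = 0)
    (hi' : Indep n a' b') (h' : om n a' b' = 0) :
    ∃ g ∈ SpR n, g *ᵥ a = a' ∧ g *ᵥ b = b' := by
  obtain ⟨g₁, hg₁, hg₁a⟩ := trans_vec hi.left_ne_zero hi'.left_ne_zero
  set b₁ := g₁ *ᵥ b with hb₁
  have h₁ : om n a' b₁ = 0 := by rw [← hg₁a, hb₁, SpR_om hg₁, h]
  have hind₁ : Indep n a' b₁ := by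
    intro s t hst
    apply hi s t
    apply SpR_inj hg₁
    rw [Matrix.mulVec_add, Matrix.mulVec_smul, Matrix.mulVec_smul, hg₁a, ← hb₁]
    exact hst
  suffices hs : ∃ g₂ ∈ SpR n, g₂ *ᵥ b₁ = b' ∧ g₂ *ᵥ a' = a' by
    obtain ⟨g₂, hg₂, hg₂b, hg₂a⟩ := hs
    exact ⟨g₂ * g₁, SpR_mul hg₂ hg₁, by rw [← Matrix.mulVec_mulVec, hg₁a, hg₂a],
      by rw [← Matrix.mulVec_mulVec, ← hb₁, hg₂b]⟩
  by_cases hyy : om n b₁ b' ≠ 0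
  · exact pair_step (by rw [om_sub_right, h₁, h', sub_self]) hyy
  push_neg at hyy
  obtain ⟨w₁, hw₁p, hw₁⟩ := perp_exists h₁ hind₁
  obtain ⟨w₂, hw₂p, hw₂⟩ := perp_exists h' hi'
  have key : ∃ y₃, om n a' y₃ = 0 ∧ om n b₁ y₃ ≠ 0 ∧ om n y₃ b' ≠ 0 := by
    by_cases h2 : om n b₁ w₂ ≠ 0
    · refine ⟨w₂, hw₂p, h2, ?_⟩
      rw [om_skew]
      simpa using hw₂
    by_cases h3 : om n w₁ b' ≠ 0
    · exact ⟨w₁, hw₁p, hw₁, h3⟩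
    push_neg at h2 h3
    refine ⟨w₁ + w₂, ?_, ?_, ?_⟩
    · rw [om_add_right, hw₁p, hw₂p, add_zero]
    · rw [om_add_right, h2, add_zero]; exact hw₁
    · rw [om_add_left, h3, zero_add, om_skew]
      simpa using hw₂
  obtain ⟨y₃, hy₃p, hy₃1, hy₃2⟩ := key
  exact stab_chain (by rw [om_sub_right, hy₃p, h₁, sub_self])
    (by rw [om_sub_right, hy₃p, h', sub_self]) hy₃1 hy₃2


-- ### complex plumbing

/-- Coercion of a real vector to a complex vector. -/
def cf (v : VR n) : VC n := fun i => (v i : ℂ)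

/-- Real part of a complex vector. -/
def reV (z : VC n) : VR n := fun i => (z i).re

/-- Imaginary part of a complex vector. -/
def imV (z : VC n) : VR n := fun i => (z i).im

/-- The value of the hermitian form on the diagonal, as a real number. -/
def rho (n : ℕ) (z : VC n) : ℝ := om n (imV z) (reV z)

lemma decomp (z : VC n) : z = cf (reV z) + Complex.I • cf (imV z) := by
  funext i
  simp only [cf, reV, imV, Pi.add_apply, Pi.smul_apply, smul_eq_mul]
  rw [mul_comm]
  exact (Complex.re_add_im (z i)).symm

lemma reV_mk (a b : VR n) : reV (cf a + Complex.I • cf b) = a := by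
  funext i
  simp [reV, cf, Complex.add_re, Complex.mul_re]

lemma imV_mk (a b : VR n) : imV (cf a + Complex.I • cf b) = b := by
  funext i
  simp [imV, cf, Complex.add_im, Complex.mul_im]

lemma cf_eq_zero {v : VR n} : cf v = 0 ↔ v = 0 := by
  constructor
  · intro h
    funext i
    have := congrFun h i
    simpa [cf] using this
  · intro h
    rw [h]
    funext i
    simp [cf]

lemma cf_smul (s : ℝ) (v : VR n) : cf (s • v) = (s : ℂ) • cf v := by
  funext i
  simp [cf]

lemma cf_add (v w : VR n) : cf (v + w) = cf v + cf w := by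
  funext i
  simp [cf]

lemma mapC_cf (g : Matrix (Fin n ⊕ Fin n) (Fin n ⊕ Fin n) ℝ) (v : VR n) :
    g.map Complex.ofReal *ᵥ cf v = cf (g *ᵥ v) := by
  funext i
  simp only [Matrix.mulVec, dotProduct, Matrix.map_apply, cf]
  push_cast
  rfl

lemma mapC_mulVec (g : Matrix (Fin n ⊕ Fin n) (Fin n ⊕ Fin n) ℝ) (z : VC n) :
    g.map Complex.ofReal *ᵥ z
      = cf (g *ᵥ reV z) + Complex.I • cf (g *ᵥ imV z) := by
  conv_lhs => rw [decomp z]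
  rw [Matrix.mulVec_add, Matrix.mulVec_smul, mapC_cf, mapC_cf]

/-- The complex bilinear symplectic form. -/
def omC (n : ℕ) (z w : VC n) : ℂ := z ⬝ᵥ (Jmat n *ᵥ w)

lemma Jmat_transpose : (Jmat n)ᵀ = -Jmat n := by
  simp [Jmat, Matrix.fromBlocks_transpose, Matrix.fromBlocks_neg]

lemma omC_skew (x y : VC n) : omC n x y = -omC n y x := by
  unfold omC
  rw [Matrix.dotProduct_mulVec]
  have h1 : x ᵥ* Jmat n = -(Jmat n *ᵥ x) := by
    rw [← Matrix.mulVec_transpose, Jmat_transpose, Matrix.neg_mulVec]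
  rw [h1, neg_dotProduct, dotProduct_comm]

lemma omC_self (x : VC n) : omC n x x = 0 := by
  have h := omC_skew x x
  linear_combination h / 2

lemma omC_add_right (x y y' : VC n) : omC n x (y + y') = omC n x y + omC n x y' := by
  simp [omC, Matrix.mulVec_add, dotProduct_add]

lemma omC_sub_left (x x' y : VC n) : omC n (x - x') y = omC n x y - omC n x' y := by
  simp [omC, sub_dotProduct]

lemma omC_smul_left (c : ℂ) (x y : VC n) : omC n (c • x) y = c * omC n x y := by
  simp [omC, smul_dotProduct]

lemma omC_smul_right (c : ℂ) (x y : VC n) : omC n x (c • y) = c * omC n x y := by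
  simp [omC, Matrix.mulVec_smul, dotProduct_smul]

lemma omC_cf (a b : VR n) : omC n (cf a) (cf b) = ((om n a b : ℝ) : ℂ) := by
  simp only [omC, om, Matrix.mulVec, dotProduct, cf, Jmat_eq_map,
    Matrix.map_apply]
  push_cast
  rfl

lemma star_cf_decomp (a b : VR n) :
    star (cf a + Complex.I • cf b) = cf a - Complex.I • cf b := by
  funext i
  simp only [Pi.star_apply, Pi.add_apply, Pi.sub_apply, Pi.smul_apply,
    smul_eq_mul, cf, Complex.star_def, map_add, _root_.map_mul,
    Complex.conj_ofReal, Complex.conj_I]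
  ring

lemma hform_self (z : VC n) : hform n z z = ((rho n z : ℝ) : ℂ) := by
  set a := reV z with ha
  set b := imV z with hb
  have hz : z = cf a + Complex.I • cf b := decomp z
  have key : hform n z z
      = (Complex.I / 2) * omC n (cf a - Complex.I • cf b) (cf a + Complex.I • cf b) := by
    have k0 : hform n z z = (Complex.I / 2) * omC n (star z) z := rfl
    rw [k0, hz, star_cf_decomp]
  rw [key, omC_sub_left, omC_add_right, omC_add_right, omC_smul_left,
    omC_smul_left, omC_smul_right, omC_smul_right, omC_self, omC_self,
    omC_skew (cf a) (cf b), omC_cf]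
  have hr : rho n z = om n b a := rfl
  rw [hr]
  linear_combination (-((om n b a : ℝ) : ℂ)) * Complex.I_sq

lemma hform_smul_self (lam : ℂ) (z : VC n) :
    hform n (lam • z) (lam • z) = ((Complex.normSq lam : ℝ) : ℂ) * hform n z z := by
  unfold hform
  rw [star_smul, Matrix.mulVec_smul, smul_dotProduct, dotProduct_smul]
  rw [Complex.normSq_eq_conj_mul_self]
  simp only [smul_eq_mul, Complex.star_def]
  ring

lemma rho_smul (lam : ℂ) (z : VC n) :
    rho n (lam • z) = Complex.normSq lam * rho n z := by
  have h := hform_smul_self lam z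
  rw [hform_self, hform_self] at h
  exact_mod_cast h

lemma star_mapC (g : Matrix (Fin n ⊕ Fin n) (Fin n ⊕ Fin n) ℝ) (z : VC n) :
    star (g.map Complex.ofReal *ᵥ z) = g.map Complex.ofReal *ᵥ star z := by
  funext i
  simp only [Pi.star_apply, Matrix.mulVec, dotProduct, Matrix.map_apply,
    Complex.star_def, map_sum, _root_.map_mul, Complex.conj_ofReal]

lemma Jmat_identity {g : Matrix (Fin n ⊕ Fin n) (Fin n ⊕ Fin n) ℝ} (hg : g ∈ SpR n) :
    (g.map Complex.ofReal)ᵀ * Jmat n * g.map Complex.ofReal = Jmat n := by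
  have hcoe : (Complex.ofReal : ℝ → ℂ) = ⇑Complex.ofRealHom := rfl
  rw [Jmat_eq_map, hcoe, ← Matrix.transpose_map, ← Matrix.map_mul,
    ← Matrix.map_mul, hg.2]

lemma hform_mapC {g : Matrix (Fin n ⊕ Fin n) (Fin n ⊕ Fin n) ℝ} (hg : g ∈ SpR n)
    (z : VC n) :
    hform n (g.map Complex.ofReal *ᵥ z) (g.map Complex.ofReal *ᵥ z) = hform n z z := by
  unfold hform
  congr 1
  rw [star_mapC]
  set gC := g.map Complex.ofReal with hgC
  have h1 : ∀ s, (gC *ᵥ star z) ⬝ᵥ s = star z ⬝ᵥ (gCᵀ *ᵥ s) := by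
    intro s
    rw [Matrix.dotProduct_mulVec, Matrix.vecMul_transpose]
  rw [h1, Matrix.mulVec_mulVec, Matrix.mulVec_mulVec, Jmat_identity hg]

lemma mapC_inj {g : Matrix (Fin n ⊕ Fin n) (Fin n ⊕ Fin n) ℝ} (hg : g ∈ SpR n)
    {z : VC n} (h : g.map Complex.ofReal *ᵥ z = 0) : z = 0 := by
  set gC := g.map Complex.ofReal with hgC
  have hdet : gC.det ≠ 0 := by
    have hcoe : gC = Complex.ofRealHom.mapMatrix g := rfl
    rw [hcoe, ← RingHom.map_det]
    simpa using hg.1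
  have hu : gC⁻¹ *ᵥ (gC *ᵥ z) = z := by
    rw [Matrix.mulVec_mulVec, Matrix.nonsing_inv_mul gC (isUnit_iff_ne_zero.2 hdet),
      Matrix.one_mulVec]
  rw [h, Matrix.mulVec_zero] at hu
  exact hu.symm

lemma mapC_ne_zero {g : Matrix (Fin n ⊕ Fin n) (Fin n ⊕ Fin n) ℝ} (hg : g ∈ SpR n)
    {z : VC n} (h : z ≠ 0) : g.map Complex.ofReal *ᵥ z ≠ 0 :=
  fun hc => h (mapC_inj hg hc)

lemma rho_mk (a b : VR n) : rho n (cf a + Complex.I • cf b) = om n b a := by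
  unfold rho
  rw [reV_mk, imV_mk]

-- ### projectivization lemmas

lemma mk_congr {z w : VC n} (hz : z ≠ 0) (hw : w ≠ 0) (h : z = w) :
    Projectivization.mk ℂ z hz = Projectivization.mk ℂ w hw := by
  subst h
  rfl

lemma mem_Dpos_iff {z : VC n} (hz : z ≠ 0) :
    Projectivization.mk ℂ z hz ∈ Dpos n ↔ 0 < rho n z := by
  constructor
  · rintro ⟨w, hw, hpos, heq⟩
    rw [Projectivization.mk_eq_mk_iff] at heq
    obtain ⟨a, ha⟩ := heq
    rw [Units.smul_def] at ha
    rw [← ha, hform_smul_self, hform_self, ← Complex.ofReal_mul,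
      Complex.zero_lt_real] at hpos
    have hns : 0 < Complex.normSq (a : ℂ) := by
      rw [Complex.normSq_pos]
      exact a.ne_zero
    nlinarith
  · intro h
    exact ⟨z, hz, by rw [hform_self]; exact Complex.zero_lt_real.2 h, rfl⟩

lemma mem_Dneg_iff {z : VC n} (hz : z ≠ 0) :
    Projectivization.mk ℂ z hz ∈ Dneg n ↔ rho n z < 0 := by
  have h0 : (0 : ℂ) = ((0 : ℝ) : ℂ) := by norm_num
  constructor
  · rintro ⟨w, hw, hneg, heq⟩
    rw [Projectivization.mk_eq_mk_iff] at heq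
    obtain ⟨a, ha⟩ := heq
    rw [Units.smul_def] at ha
    rw [← ha, hform_smul_self, hform_self, ← Complex.ofReal_mul, h0,
      Complex.real_lt_real] at hneg
    have hns : 0 < Complex.normSq (a : ℂ) := by
      rw [Complex.normSq_pos]
      exact a.ne_zero
    nlinarith
  · intro h
    refine ⟨z, hz, ?_, rfl⟩
    rw [hform_self, h0, Complex.real_lt_real]
    exact h

lemma mem_Siso_iff {z : VC n} (hz : z ≠ 0) :
    Projectivization.mk ℂ z hz ∈ Siso n ↔ rho n z = 0 := by
  constructor
  · rintro ⟨w, hw, hzero, heq⟩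
    rw [Projectivization.mk_eq_mk_iff] at heq
    obtain ⟨a, ha⟩ := heq
    rw [Units.smul_def] at ha
    rw [← ha, hform_smul_self, hform_self, ← Complex.ofReal_mul,
      Complex.ofReal_eq_zero] at hzero
    have hns : Complex.normSq (a : ℂ) ≠ 0 :=
      ne_of_gt (Complex.normSq_pos.2 a.ne_zero)
    exact (mul_eq_zero.1 hzero).resolve_left hns
  · intro h
    exact ⟨z, hz, by rw [hform_self, h]; norm_num, rfl⟩

lemma reV_cf (v : VR n) : reV (cf v) = v := by
  funext i
  simp [reV, cf]

lemma imV_cf (v : VR n) : imV (cf v) = 0 := by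
  funext i
  simp [imV, cf]

lemma mem_Sreal_iff {z : VC n} (hz : z ≠ 0) :
    Projectivization.mk ℂ z hz ∈ Sreal n ↔
      ∃ s t : ℝ, (s ≠ 0 ∨ t ≠ 0) ∧ s • reV z + t • imV z = 0 := by
  constructor
  · rintro ⟨v, hv, heq⟩
    rw [Projectivization.mk_eq_mk_iff] at heq
    obtain ⟨a, ha⟩ := heq
    have ha' : a • z = cf v := ha
    have hzv : z = ((a⁻¹ : ℂˣ) : ℂ) • cf v := by
      rw [← Units.smul_def, ← ha', inv_smul_smul]
    set lam := ((a⁻¹ : ℂˣ) : ℂ) with hlam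
    have hre : reV z = lam.re • v := by
      funext i
      rw [hzv]
      simp [reV, cf, Complex.mul_re]
    have him : imV z = lam.im • v := by
      funext i
      rw [hzv]
      simp [imV, cf, Complex.mul_im]
    have hsum : lam.im • reV z + (-lam.re) • imV z = 0 := by
      rw [hre, him, smul_smul, smul_smul, ← add_smul]
      have : lam.im * lam.re + -lam.re * lam.im = 0 := by ring
      rw [this, zero_smul]
    refine ⟨lam.im, -lam.re, ?_, hsum⟩
    by_cases h : lam.im = 0
    · right
      intro hc
      have hre0 : lam.re = 0 := by
        have := neg_eq_zero.1 hc
        exact this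
      have : lam = 0 := by
        apply Complex.ext
        · simp [hre0]
        · simp [h]
      exact Units.ne_zero (a⁻¹) this
    · left
      exact h
  · rintro ⟨s, t, hst, hsum⟩
    by_cases ht : t = 0
    · have hs : s ≠ 0 := by
        rcases hst with h | h
        · exact h
        · exact absurd ht h
      rw [ht, zero_smul, add_zero, smul_eq_zero] at hsum
      have hre0 : reV z = 0 := hsum.resolve_left hs
      set b := imV z with hbdef
      have hzdec : z = Complex.I • cf b := by
        conv_lhs => rw [decomp z]
        rw [hre0]
        have : cf (0 : VR n) = 0 := cf_eq_zero.2 rfl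
        rw [this, zero_add]
      have hbne : cf b ≠ 0 := by
        intro hc
        apply hz
        rw [hzdec, hc, smul_zero]
      refine ⟨b, hbne, ?_⟩
      apply (Projectivization.mk_eq_mk_iff' _ _ _ _ _).2
      refine ⟨-Complex.I, ?_⟩
      rw [hzdec, smul_smul]
      have hmul : -Complex.I * Complex.I = 1 := by
        rw [neg_mul, Complex.I_mul_I, neg_neg]
      rw [hmul, one_smul]
      rfl
    · set a0 := reV z with ha0def
      set b0 := imV z with hb0def
      have hb : b0 = (-s / t) • a0 := by
        have h1 : t • b0 = (-s) • a0 := by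
          have h2 : t • b0 = (s • a0 + t • b0) - s • a0 := by module
          rw [h2, hsum, zero_sub, neg_smul]
        have h3 := congrArg (fun w => t⁻¹ • w) h1
        simp only [smul_smul, inv_mul_cancel₀ ht, one_smul] at h3
        rw [h3]
        congr 1
        field_simp
      set c : ℝ := -s / t with hc
      have hane : a0 ≠ 0 := by
        intro hc0
        apply hz
        conv_lhs => rw [decomp z]
        rw [← ha0def, ← hb0def, hb, hc0, smul_zero]
        have h0 : cf (0 : VR n) = 0 := cf_eq_zero.2 rfl
        rw [h0, smul_zero, add_zero]
      have hzdec : z = (1 + Complex.I * (c : ℂ)) • cf a0 := by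
        conv_lhs => rw [decomp z]
        rw [← ha0def, ← hb0def, hb, cf_smul, smul_smul, add_smul, one_smul]
      set lam : ℂ := 1 + Complex.I * (c : ℂ) with hlam
      have hlamne : lam ≠ 0 := by
        intro hcon
        have := congrArg Complex.re hcon
        simp [hlam, Complex.add_re, Complex.mul_re] at this
      have hcfne : cf a0 ≠ 0 := fun hc0 => hane (cf_eq_zero.1 hc0)
      refine ⟨a0, hcfne, ?_⟩
      apply (Projectivization.mk_eq_mk_iff' _ _ _ _ _).2
      refine ⟨lam⁻¹, ?_⟩
      rw [hzdec, smul_smul, inv_mul_cancel₀ hlamne, one_smul]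
      rfl

lemma not_dep_iff {a b : VR n} :
    (¬ ∃ s t : ℝ, (s ≠ 0 ∨ t ≠ 0) ∧ s • a + t • b = 0) ↔ Indep n a b := by
  constructor
  · intro h s t hst
    by_contra hc
    rw [not_and_or] at hc
    have hor : s ≠ 0 ∨ t ≠ 0 := hc
    exact h ⟨s, t, hor, hst⟩
  · rintro hi ⟨s, t, hst, hsum⟩
    obtain ⟨h1, h2⟩ := hi s t hsum
    rcases hst with h | h
    · exact h h1
    · exact h h2

lemma om_single (i j : Fin n ⊕ Fin n) :
    om n (Pi.single i 1) (Pi.single j 1) = JmatR n i j := by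
  unfold om
  rw [Matrix.mulVec_single]
  rw [single_dotProduct]
  simp

lemma normalize_pos {z : VC n} (hz : z ≠ 0) (h : 0 < rho n z) :
    ∃ (z' : VC n) (hz' : z' ≠ 0),
      Projectivization.mk ℂ z' hz' = Projectivization.mk ℂ z hz ∧ rho n z' = 1 := by
  set lam : ℂ := (((Real.sqrt (rho n z))⁻¹ : ℝ) : ℂ) with hlam
  have hsq : Real.sqrt (rho n z) ≠ 0 := by
    positivity
  have hlamne : lam ≠ 0 := by
    rw [hlam]
    exact_mod_cast inv_ne_zero hsq
  refine ⟨lam • z, smul_ne_zero hlamne hz, ?_, ?_⟩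
  · rw [Projectivization.mk_eq_mk_iff']
    exact ⟨lam, rfl⟩
  · rw [rho_smul, hlam, Complex.normSq_ofReal]
    rw [← mul_inv, Real.mul_self_sqrt h.le]
    field_simp

lemma normalize_neg {z : VC n} (hz : z ≠ 0) (h : rho n z < 0) :
    ∃ (z' : VC n) (hz' : z' ≠ 0),
      Projectivization.mk ℂ z' hz' = Projectivization.mk ℂ z hz ∧ rho n z' = -1 := by
  set lam : ℂ := (((Real.sqrt (-rho n z))⁻¹ : ℝ) : ℂ) with hlam
  have hpos : 0 < -rho n z := by linarith
  have hsq : Real.sqrt (-rho n z) ≠ 0 := by positivity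
  have hlamne : lam ≠ 0 := by
    rw [hlam]
    exact_mod_cast inv_ne_zero hsq
  refine ⟨lam • z, smul_ne_zero hlamne hz, ?_, ?_⟩
  · rw [Projectivization.mk_eq_mk_iff']
    exact ⟨lam, rfl⟩
  · rw [rho_smul, hlam, Complex.normSq_ofReal]
    rw [← mul_inv, Real.mul_self_sqrt hpos.le]
    field_simp
    rw [div_self (ne_of_lt h)]

lemma mkvec_ne_zero {a b : VR n} (ha : a ≠ 0) :
    cf a + Complex.I • cf b ≠ 0 := by
  intro h
  apply ha
  have h2 := reV_mk a b
  rw [h] at h2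
  rw [← h2]
  funext i
  simp [reV]

lemma rho_cf (v : VR n) : rho n (cf v) = 0 := by
  unfold rho
  rw [imV_cf, reV_cf, om_zero_left]

end SpAux

open SpAux

/-- For `n ≥ 2`, the action of `Sp(2n,ℝ)` on `ℙ(ℂ^{2n})` has exactly four
orbits: `D⁺`, `D⁻`, the set `Σ₀` of real lines, and the complement
`Σ \ Σ₀` of `Σ₀` in the set `Σ` of `h`-isotropic lines. -/
theorem SpR_four_orbits (n : ℕ) (hn : 2 ≤ n) :
    (Dpos n).Nonempty ∧ (Dneg n).Nonempty ∧ (Sreal n).Nonempty ∧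
    (Siso n \ Sreal n).Nonempty ∧
    Sreal n ⊆ Siso n ∧
    Dpos n ∪ Dneg n ∪ Siso n = Set.univ ∧
    ∀ x y, SameOrbitSp n x y ↔
      (x ∈ Dpos n ∧ y ∈ Dpos n) ∨ (x ∈ Dneg n ∧ y ∈ Dneg n) ∨
        (x ∈ Sreal n ∧ y ∈ Sreal n) ∨
          (x ∈ Siso n \ Sreal n ∧ y ∈ Siso n \ Sreal n) := by
  have h2 : 0 < n := by omega
  set i0 : Fin n := ⟨0, by omega⟩ with hi0
  set i1 : Fin n := ⟨1, by omega⟩ with hi1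
  have hi01 : i0 ≠ i1 := by
    rw [hi0, hi1]
    intro h
    simpa using congrArg Fin.val h
  have hsingle_ne : ∀ i : Fin n ⊕ Fin n, (Pi.single i 1 : VR n) ≠ 0 := by
    intro i h
    have := congrFun h i
    simp at this
  refine ⟨?_, ?_, ?_, ?_, ?_, ?_, ?_⟩
  · -- Dpos nonempty
    have hz : cf (Pi.single (Sum.inl i0) 1) + Complex.I • cf (Pi.single (Sum.inr i0) 1)
        ≠ (0 : VC n) :=
      mkvec_ne_zero (hsingle_ne _)
    have hrho : rho n (cf (Pi.single (Sum.inl i0) 1)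
        + Complex.I • cf (Pi.single (Sum.inr i0) 1)) = 1 := by
      rw [rho_mk, om_single]
      simp [JmatR, Matrix.fromBlocks_apply₂₁, Matrix.one_apply_eq]
    exact ⟨Projectivization.mk ℂ _ hz, _, hz,
      by rw [hform_self, hrho]; exact Complex.zero_lt_real.2 one_pos, rfl⟩
  · -- Dneg nonempty
    have hz : cf (Pi.single (Sum.inr i0) 1) + Complex.I • cf (Pi.single (Sum.inl i0) 1)
        ≠ (0 : VC n) :=
      mkvec_ne_zero (hsingle_ne _)
    have hrho : rho n (cf (Pi.single (Sum.inr i0) 1)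
        + Complex.I • cf (Pi.single (Sum.inl i0) 1)) = -1 := by
      rw [rho_mk, om_single]
      simp [JmatR, Matrix.fromBlocks_apply₁₂, Matrix.one_apply_eq]
    refine ⟨Projectivization.mk ℂ _ hz, _, hz, ?_, rfl⟩
    rw [hform_self, hrho]
    have : ((-1 : ℝ) : ℂ) < ((0 : ℝ) : ℂ) := Complex.real_lt_real.2 (by norm_num)
    simpa using this
  · -- Sreal nonempty
    have hv : (fun i => ((Pi.single (Sum.inl i0) 1 : VR n) i : ℂ)) ≠ 0 := by
      intro h
      exact hsingle_ne (Sum.inl i0) (cf_eq_zero.1 h)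
    exact ⟨Projectivization.mk ℂ _ hv, _, hv, rfl⟩
  · -- Siso \ Sreal nonempty
    have hz : cf (Pi.single (Sum.inl i0) 1) + Complex.I • cf (Pi.single (Sum.inl i1) 1)
        ≠ (0 : VC n) :=
      mkvec_ne_zero (hsingle_ne _)
    have hrho : rho n (cf (Pi.single (Sum.inl i0) 1)
        + Complex.I • cf (Pi.single (Sum.inl i1) 1)) = 0 := by
      rw [rho_mk, om_single]
      simp [JmatR, Matrix.fromBlocks_apply₁₁]
    refine ⟨Projectivization.mk ℂ _ hz, ⟨_, hz, ?_, rfl⟩, ?_⟩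
    · rw [hform_self, hrho]
      norm_num
    · intro hmem
      obtain ⟨s, t, hst, hsum⟩ := (mem_Sreal_iff hz).1 hmem
      rw [reV_mk, imV_mk] at hsum
      have h1 := congrFun hsum (Sum.inl i0)
      have h2' := congrFun hsum (Sum.inl i1)
      have hne1 : (Sum.inl i1 : Fin n ⊕ Fin n) ≠ Sum.inl i0 := by
        simp [hi01.symm]
      have hne0 : (Sum.inl i0 : Fin n ⊕ Fin n) ≠ Sum.inl i1 := by
        simp [hi01]
      simp [Pi.single_eq_same, Pi.single_eq_of_ne hne0] at h1
      simp [Pi.single_eq_same, Pi.single_eq_of_ne hne1] at h2'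
      rcases hst with h | h
      · exact h h1
      · exact h h2'
  · -- Sreal ⊆ Siso
    rintro x ⟨v, hv, rfl⟩
    refine ⟨_, hv, ?_, rfl⟩
    show hform n (cf v) (cf v) = 0
    rw [hform_self, rho_cf]
    norm_num
  · -- union is everything
    ext x
    simp only [Set.mem_union, Set.mem_univ, iff_true]
    induction x using Projectivization.ind with
    | h z hz =>
      rcases lt_trichotomy (rho n z) 0 with h | h | h
      · exact Or.inl (Or.inr ⟨z, hz, by rw [hform_self]; exact_mod_cast h, rfl⟩)
      · exact Or.inr ⟨z, hz, by rw [hform_self, h]; norm_num, rfl⟩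
      · exact Or.inl (Or.inl ⟨z, hz, by rw [hform_self]; exact_mod_cast h, rfl⟩)
  · -- orbit characterization
    intro x y
    constructor
    · rintro ⟨g, hg, z, hz, hgz, rfl, rfl⟩
      have hdec := mapC_mulVec g z
      have hre : reV (g.map Complex.ofReal *ᵥ z) = g *ᵥ reV z := by
        rw [hdec, reV_mk]
      have him : imV (g.map Complex.ofReal *ᵥ z) = g *ᵥ imV z := by
        rw [hdec, imV_mk]
      have hrho : rho n (g.map Complex.ofReal *ᵥ z) = rho n z := by
        unfold rho
        rw [hre, him, SpR_om hg]
      rcases lt_trichotomy (rho n z) 0 with h | h | h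
      · exact Or.inr (Or.inl ⟨⟨z, hz, by rw [hform_self]; exact_mod_cast h, rfl⟩,
          ⟨_, hgz, by rw [hform_self, hrho]; exact_mod_cast h, rfl⟩⟩)
      · by_cases hxr : ∃ s t : ℝ, (s ≠ 0 ∨ t ≠ 0) ∧ s • reV z + t • imV z = 0
        · refine Or.inr (Or.inr (Or.inl ⟨(mem_Sreal_iff hz).2 hxr, ?_⟩))
          apply (mem_Sreal_iff hgz).2
          obtain ⟨s, t, hst, hsum⟩ := hxr
          refine ⟨s, t, hst, ?_⟩
          rw [hre, him, ← Matrix.mulVec_smul, ← Matrix.mulVec_smul,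
            ← Matrix.mulVec_add, hsum, Matrix.mulVec_zero]
        · refine Or.inr (Or.inr (Or.inr
            ⟨⟨⟨z, hz, by rw [hform_self, h]; norm_num, rfl⟩, ?_⟩,
             ⟨⟨_, hgz, by rw [hform_self, hrho, h]; norm_num, rfl⟩, ?_⟩⟩))
          · intro hmem
            exact hxr ((mem_Sreal_iff hz).1 hmem)
          · intro hmem
            obtain ⟨s, t, hst, hsum⟩ := (mem_Sreal_iff hgz).1 hmem
            rw [hre, him, ← Matrix.mulVec_smul, ← Matrix.mulVec_smul,
              ← Matrix.mulVec_add] at hsum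
            exact hxr ⟨s, t, hst, SpR_inj hg hsum⟩
      · exact Or.inl ⟨⟨z, hz, by rw [hform_self]; exact_mod_cast h, rfl⟩,
          ⟨_, hgz, by rw [hform_self, hrho]; exact_mod_cast h, rfl⟩⟩
    · rintro (⟨hx, hy⟩ | ⟨hx, hy⟩ | ⟨hx, hy⟩ | ⟨hx, hy⟩)
      · -- Dpos
        obtain ⟨z, hz, hzp, rfl⟩ := hx
        obtain ⟨w, hw, hwp, rfl⟩ := hy
        rw [hform_self, Complex.zero_lt_real] at hzp hwp
        obtain ⟨z', hz', hmkz, hrz⟩ := normalize_pos hz hzp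
        obtain ⟨w', hw', hmkw, hrw⟩ := normalize_pos hw hwp
        have h1 : om n (imV z') (reV z') = 1 := hrz
        have h1' : om n (imV w') (reV w') = 1 := hrw
        obtain ⟨g, hg, hga, hgb⟩ := trans_hyp h1 h1'
        have hvec : g.map Complex.ofReal *ᵥ z' = w' := by
          rw [mapC_mulVec, hga, hgb, ← decomp w']
        have hgzne : g.map Complex.ofReal *ᵥ z' ≠ 0 := by
          rw [hvec]; exact hw'
        exact ⟨g, hg, z', hz', hgzne, hmkz,
          (mk_congr hgzne hw' hvec).trans hmkw⟩
      · -- Dneg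
        obtain ⟨z, hz, hzp, rfl⟩ := hx
        obtain ⟨w, hw, hwp, rfl⟩ := hy
        rw [hform_self] at hzp hwp
        have hzp' : rho n z < 0 := by exact_mod_cast hzp
        have hwp' : rho n w < 0 := by exact_mod_cast hwp
        obtain ⟨z', hz', hmkz, hrz⟩ := normalize_neg hz hzp'
        obtain ⟨w', hw', hmkw, hrw⟩ := normalize_neg hw hwp'
        have h1 : om n (reV z') (imV z') = 1 := by
          rw [om_skew]
          have : om n (imV z') (reV z') = -1 := hrz
          rw [this]
          norm_num
        have h1' : om n (reV w') (imV w') = 1 := by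
          rw [om_skew]
          have : om n (imV w') (reV w') = -1 := hrw
          rw [this]
          norm_num
        obtain ⟨g, hg, hga, hgb⟩ := trans_hyp h1 h1'
        have hvec : g.map Complex.ofReal *ᵥ z' = w' := by
          rw [mapC_mulVec, hga, hgb, ← decomp w']
        have hgzne : g.map Complex.ofReal *ᵥ z' ≠ 0 := by
          rw [hvec]; exact hw'
        exact ⟨g, hg, z', hz', hgzne, hmkz,
          (mk_congr hgzne hw' hvec).trans hmkw⟩
      · -- Sreal
        obtain ⟨v, hv, rfl⟩ := hx
        obtain ⟨w, hw, rfl⟩ := hy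
        have hvne : v ≠ 0 := fun h => hv (by rw [h]; funext i; simp)
        have hwne : w ≠ 0 := fun h => hw (by rw [h]; funext i; simp)
        obtain ⟨g, hg, hgv⟩ := trans_vec hvne hwne
        have hvec : g.map Complex.ofReal *ᵥ (fun i => ((v i : ℂ)))
            = fun i => ((w i : ℂ)) := by
          have h3 := mapC_cf g v
          rw [hgv] at h3
          exact h3
        have hgzne : g.map Complex.ofReal *ᵥ (fun i => ((v i : ℂ))) ≠ 0 := by
          rw [hvec]; exact hw
        exact ⟨g, hg, _, hv, hgzne, rfl, mk_congr hgzne hw hvec⟩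
      · -- Siso \ Sreal
        obtain ⟨hxi, hxr⟩ := hx
        obtain ⟨hyi, hyr⟩ := hy
        obtain ⟨z, hz, hz0, rfl⟩ := hxi
        obtain ⟨w, hw, hw0, rfl⟩ := hyi
        have hrz : rho n z = 0 := by
          rw [hform_self] at hz0
          exact_mod_cast hz0
        have hrw : rho n w = 0 := by
          rw [hform_self] at hw0
          exact_mod_cast hw0
        have hiz : Indep n (reV z) (imV z) :=
          not_dep_iff.1 (fun hdep => hxr ((mem_Sreal_iff hz).2 hdep))
        have hiw : Indep n (reV w) (imV w) :=
          not_dep_iff.1 (fun hdep => hyr ((mem_Sreal_iff hw).2 hdep))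
        have homz : om n (reV z) (imV z) = 0 := by
          rw [om_skew]
          have : om n (imV z) (reV z) = 0 := hrz
          rw [this]
          norm_num
        have homw : om n (reV w) (imV w) = 0 := by
          rw [om_skew]
          have : om n (imV w) (reV w) = 0 := hrw
          rw [this]
          norm_num
        obtain ⟨g, hg, hga, hgb⟩ := trans_iso hiz homz hiw homw
        have hvec : g.map Complex.ofReal *ᵥ z = w := by
          rw [mapC_mulVec, hga, hgb, ← decomp w]
        have hgzne : g.map Complex.ofReal *ᵥ z ≠ 0 := by
          rw [hvec]; exact hw
        exact ⟨g, hg, z, hz, hgzne, rfl, mk_congr hgzne hw hvec⟩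


end
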